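/- Let (V,E) be a temporal graph over timestamps {0,…,T} and let α ∈ [0,1]. Every temporal path p' from u to v in (V,E), with first edge at timestamp t_0 and last edge at timestamp t_n, can be lifted to a directed path p in the transformed graph G' from the replica (u,t_0) to the replica (v,t_n) (using a snapshot edge for each timestamped edge of p' and waiting edges between consecutive timestamps) such that ℓ(p) = L(p'). -/

import Mathlib

open scoped ENNReal BigOperators

variable {V : Type*}

/-- `p` is a temporal path from `u` to `v` with edges in `E`:
a nonempty list of timestamped edges, consecutive in space and
with nondecreasing timestamps. -/
def IsTempPath (E : Set (V × V × ℕ)) (u v : V) (p : List (V × V × ℕ)) : Prop :=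
  p ≠ [] ∧ (∀ e ∈ p, e ∈ E) ∧
    List.Chain' (fun e f : V × V × ℕ => e.2.1 = f.1 ∧ e.2.2 ≤ f.2.2) p ∧
    p.head?.map Prod.fst = some u ∧
    p.getLast?.map (fun e => e.2.1) = some v

/-- Timestamp of the first edge of a temporal path. -/
def firstTime (p : List (V × V × ℕ)) : ℕ := (p.head?.map (fun e => e.2.2)).getD 0

/-- Timestamp of the last edge of a temporal path. -/
def lastTime (p : List (V × V × ℕ)) : ℕ := (p.getLast?.map (fun e => e.2.2)).getD 0

/-- Cost `L_α(p) = α·(number of edges) + (1-α)·(t_n - t_0)` of a temporal path. -/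
noncomputable def costL (α : ℝ) (p : List (V × V × ℕ)) : ℝ :=
  α * p.length + (1 - α) * ((lastTime p : ℝ) - (firstTime p : ℝ))

/-- Shortest-fastest-path distance: infimum of `L_α` over temporal paths from `u` to `v`,
taken in `ℝ≥0∞` (so `∞` if no temporal path exists). -/
noncomputable def sfpDist (α : ℝ) (E : Set (V × V × ℕ)) (u v : V) : ℝ≥0∞ :=
  sInf {c : ℝ≥0∞ | ∃ p, IsTempPath E u v p ∧ c = ENNReal.ofReal (costL α p)}

/-- Adjacency of the transformed graph `G'` on `V × {0,…,T}`:
waiting edges `(v,t) → (v,t+1)` and snapshot edges `(u,t) → (v,t)` for `(u,v,t) ∈ E`. -/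
def TransAdj (E : Set (V × V × ℕ)) (T : ℕ) : V × ℕ → V × ℕ → Prop := fun a b =>
  (a.1 = b.1 ∧ b.2 = a.2 + 1 ∧ b.2 ≤ T) ∨ ((a.1, b.1, a.2) ∈ E ∧ b.2 = a.2)

/-- Weight of an edge of the transformed graph: `α` for snapshot edges (same timestamp),
`1 - α` for waiting edges. -/
noncomputable def transWeight (α : ℝ) (a b : V × ℕ) : ℝ := if a.2 = b.2 then α else 1 - α

/-- Length `ℓ` of a path in the transformed graph (given as its list of visited vertices):
the sum of the weights of its edges. -/
noncomputable def transLen (α : ℝ) (p : List (V × ℕ)) : ℝ :=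
  ((p.zip p.tail).map fun ab => transWeight α ab.1 ab.2).sum

/-- `p` is a directed path in the transformed graph from `x` to `y`,
given as its (nonempty) list of visited vertices. -/
def IsTransPath (E : Set (V × V × ℕ)) (T : ℕ) (x y : V × ℕ) (p : List (V × ℕ)) : Prop :=
  p ≠ [] ∧ List.Chain' (TransAdj E T) p ∧ p.head? = some x ∧ p.getLast? = some y

/-- Projection of a transformed-graph path to a list of timestamped edges:
delete the waiting edges and read each snapshot edge `((x,t),(y,t))` as `(x,y,t)`. -/
def project (p : List (V × ℕ)) : List (V × V × ℕ) :=
  ((p.zip p.tail).filter fun ab => ab.1.2 == ab.2.2).map fun ab => (ab.1.1, ab.2.1, ab.1.2)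

/-- Shortest-path distance in the transformed graph, in `ℝ≥0∞`. -/
noncomputable def transDist (E : Set (V × V × ℕ)) (T : ℕ) (α : ℝ) (x y : V × ℕ) : ℝ≥0∞ :=
  sInf {c : ℝ≥0∞ | ∃ p, IsTransPath E T x y p ∧ c = ENNReal.ofReal (transLen α p)}

/-- Shortest-path distance (number of edges) in a static graph with adjacency `A`,
in `ℝ≥0∞`: the infimum of the number of edges over (nonempty) walks from `u` to `v`. -/
noncomputable def staticDist (A : V → V → Prop) (u v : V) : ℝ≥0∞ :=
  sInf {c : ℝ≥0∞ | ∃ p : List (V × V), p ≠ [] ∧ (∀ e ∈ p, A e.1 e.2) ∧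
    List.Chain' (fun e f : V × V => e.2 = f.1) p ∧
    p.head?.map Prod.fst = some u ∧ p.getLast?.map Prod.snd = some v ∧
    c = (p.length : ℝ≥0∞)}

/-- Per-pair temporal inefficiency `[(1 - α/d(v,u)) + (1 - α/d(u,v))]/2`,
with the convention `α/∞ = 0` (via `ENNReal.toReal`). -/
noncomputable def perPairIneff (α : ℝ) (E : Set (V × V × ℕ)) (u v : V) : ℝ :=
  ((1 - α / (sfpDist α E v u).toReal) + (1 - α / (sfpDist α E u v).toReal)) / 2

/-- Temporal network inefficiency: the sum of the per-pair inefficiency over unordered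
pairs of distinct vertices (the summand is symmetric, so we sum over ordered pairs and
halve). -/
noncomputable def tempIneff (α : ℝ) (E : Set (V × V × ℕ)) [Fintype V] [DecidableEq V] : ℝ :=
  (∑ q ∈ Finset.univ.offDiag, perPairIneff α E (Prod.fst q) (Prod.snd q)) / 2

/-- Temporal edges of the subgraph induced by `S`. -/
def inducedE (E : Set (V × V × ℕ)) (S : Set V) : Set (V × V × ℕ) :=
  {e ∈ E | e.1 ∈ S ∧ e.2.1 ∈ S}

/-- Temporal network inefficiency of the temporal subgraph induced by a finite set `S`. -/
noncomputable def tempIneffOn (α : ℝ) (E : Set (V × V × ℕ)) [DecidableEq V]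
    (S : Finset V) : ℝ :=
  (∑ q ∈ S.offDiag, perPairIneff α (inducedE E ↑S) (Prod.fst q) (Prod.snd q)) / 2

/-- Static network inefficiency `Σ_{u ≠ v ∈ S} (1 - 1/d_{G[S]}(u,v))` (unordered pairs,
with `1/∞ = 0`) of the subgraph induced by `S` in the static graph with adjacency `A`. -/
noncomputable def staticIneffOn (A : V → V → Prop) [DecidableEq V] (S : Finset V) : ℝ :=
  (∑ q ∈ S.offDiag,
    (1 - 1 / (staticDist (fun x y => A x y ∧ x ∈ S ∧ y ∈ S)
      (Prod.fst q) (Prod.snd q)).toReal)) / 2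

/-- every temporal path `p'` from `u` to `v` lifts to a directed path in
the transformed graph `G'` from the replica `(u,t_0)` to the replica `(v,t_n)` (using a
snapshot edge per timestamped edge and waiting edges in between, i.e. projecting back
to `p'`) of the same length/cost. -/
def liftP : V → ℕ → List (V × V × ℕ) → List (V × ℕ)
  | a, t, [] => [(a, t)]
  | a, t, (x, y, s) :: rest =>
    if t < s then (a, t) :: liftP a (t + 1) ((x, y, s) :: rest)
    else (a, t) :: liftP y s rest
termination_by a t p' => (p'.length, ((p'.head?.map (fun e => e.2.2)).getD 0) - t)
decreasing_by
  · simp_wf; right; omega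
  · simp_wf; left; omega

lemma liftP_cons (a : V) (t : ℕ) (p' : List (V × V × ℕ)) :
    ∃ q, liftP a t p' = (a, t) :: q := by
  cases p' with
  | nil => exact ⟨[], by rw [liftP]⟩
  | cons e rest =>
    obtain ⟨x, y, s⟩ := e
    unfold liftP
    split <;> exact ⟨_, rfl⟩

lemma project_cons_cons (x y : V × ℕ) (l : List (V × ℕ)) :
    project (x :: y :: l) =
      (if x.2 = y.2 then [(x.1, y.1, x.2)] else []) ++ project (y :: l) := by
  simp only [project, List.tail_cons, List.zip_cons_cons, List.filter_cons]
  split <;> rename_i h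
  · rw [if_pos (by simpa using h)]; simp
  · rw [if_neg (by simpa using h)]; simp

lemma transLen_cons_cons (α : ℝ) (x y : V × ℕ) (l : List (V × ℕ)) :
    transLen α (x :: y :: l) = transWeight α x y + transLen α (y :: l) := by
  simp [transLen]

lemma key (E : Set (V × V × ℕ)) (T : ℕ) (α : ℝ) (hT : ∀ e ∈ E, e.2.2 ≤ T)
    (a : V) (t : ℕ) (p' : List (V × V × ℕ)) :
    (∀ e ∈ p', e ∈ E) → t ≤ T →
    List.Chain' (fun e f : V × V × ℕ => e.2.1 = f.1 ∧ e.2.2 ≤ f.2.2) ((a, a, t) :: p') →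
    (liftP a t p').getLast? =
        some ((p'.getLast?.map fun e => e.2.1).getD a,
              (p'.getLast?.map fun e => e.2.2).getD t) ∧
    List.Chain' (TransAdj E T) (liftP a t p') ∧
    project (liftP a t p') = p' ∧
    transLen α (liftP a t p') =
      α * p'.length + (1 - α) * ((((p'.getLast?.map fun e => e.2.2).getD t : ℕ) : ℝ) - t) := by
  induction a, t, p' using liftP.induct with
  | case1 a t =>
    intro _ _ _
    refine ⟨by simp [liftP], by simp [liftP, List.Chain'], by simp [liftP, project], ?_⟩
    simp [liftP, transLen]
  | case2 a t x y s rest hlt ih =>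
    intro hmem htT hch
    have hsT : s ≤ T := hT (x, y, s) (hmem (x, y, s) (by simp))
    have hch' : List.Chain' (fun e f : V × V × ℕ => e.2.1 = f.1 ∧ e.2.2 ≤ f.2.2)
        ((a, a, t + 1) :: (x, y, s) :: rest) := by
      rw [List.Chain', List.isChain_cons_cons] at hch ⊢
      obtain ⟨⟨h1, h2⟩, h3⟩ := hch
      simp only at h1 h2
      exact ⟨⟨h1, by simp; omega⟩, h3⟩
    obtain ⟨hL, hC, hP, hW⟩ := ih hmem (by omega) hch'
    obtain ⟨q, hq⟩ := liftP_cons a (t + 1) ((x, y, s) :: rest)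
    have hlift : liftP a t ((x, y, s) :: rest) = (a, t) :: (a, t + 1) :: q := by
      rw [liftP, if_pos hlt, hq]
    obtain ⟨z, hz⟩ : ∃ z, ((x, y, s) :: rest).getLast? = some z :=
      ⟨_, List.getLast?_eq_getLast (by simp)⟩
    rw [hq] at hL hC hP hW
    simp only [hz, Option.map_some, Option.getD_some] at hL hW ⊢
    refine ⟨?_, ?_, ?_, ?_⟩
    · rw [hlift, List.getLast?_cons_cons]; exact hL
    · rw [hlift, List.Chain', List.isChain_cons_cons]
      exact ⟨Or.inl ⟨rfl, rfl, by omega⟩, hC⟩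
    · rw [hlift, project_cons_cons, if_neg (by simp)]
      simpa using hP
    · rw [hlift, transLen_cons_cons, hW, transWeight, if_neg (by simp)]
      push_cast
      ring
  | case3 a t x y s rest hlt ih =>
    intro hmem htT hch
    rw [List.Chain', List.isChain_cons_cons] at hch
    obtain ⟨⟨hax, hts⟩, hch2⟩ := hch
    simp only at hax hts
    have hts' : t = s := by omega
    subst hts'
    subst hax
    have hch' : List.Chain' (fun e f : V × V × ℕ => e.2.1 = f.1 ∧ e.2.2 ≤ f.2.2)
        ((y, y, t) :: rest) := by
      cases rest with
      | nil => simp [List.Chain']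
      | cons f rest' =>
        rw [List.isChain_cons_cons] at hch2; rw [List.Chain', List.isChain_cons_cons]
        exact ⟨hch2.1, hch2.2⟩
    obtain ⟨hL, hC, hP, hW⟩ := ih (fun e he => hmem e (by simp [he])) htT hch'
    obtain ⟨q, hq⟩ := liftP_cons y t rest
    have hlift : liftP a t ((a, y, t) :: rest) = (a, t) :: (y, t) :: q := by
      rw [liftP, if_neg hlt, hq]
    rw [hq] at hL hC hP hW
    have hE : (a, y, t) ∈ E := hmem (a, y, t) (by simp)
    cases rest with
    | nil =>
      refine ⟨?_, ?_, ?_, ?_⟩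
      · rw [hlift, List.getLast?_cons_cons]
        simpa using hL
      · rw [hlift, List.Chain', List.isChain_cons_cons]
        exact ⟨Or.inr ⟨hE, rfl⟩, hC⟩
      · rw [hlift, project_cons_cons, if_pos rfl]
        simpa using hP
      · rw [hlift, transLen_cons_cons, hW, transWeight, if_pos rfl]
        simp
    | cons f rest' =>
      obtain ⟨z, hz⟩ : ∃ z, (f :: rest').getLast? = some z :=
        ⟨_, List.getLast?_eq_getLast (by simp)⟩
      rw [hz] at hL hW
      simp only [Option.map_some, Option.getD_some] at hL hW
      refine ⟨?_, ?_, ?_, ?_⟩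
      · rw [hlift, List.getLast?_cons_cons, hL, List.getLast?_cons_cons, hz]
        simp
      · rw [hlift, List.Chain', List.isChain_cons_cons]
        exact ⟨Or.inr ⟨hE, rfl⟩, hC⟩
      · rw [hlift, project_cons_cons, if_pos rfl]
        simpa using hP
      · rw [hlift, transLen_cons_cons, hW, transWeight, if_pos rfl,
          List.getLast?_cons_cons, hz]
        simp only [Option.map_some, Option.getD_some, List.length_cons]
        push_cast
        ring

theorem stmt1 (T : ℕ) (E : Set (V × V × ℕ)) (α : ℝ)
    (hsym : ∀ u v t, (u, v, t) ∈ E ↔ (v, u, t) ∈ E)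
    (hT : ∀ e ∈ E, e.2.2 ≤ T) (hα0 : 0 ≤ α) (hα1 : α ≤ 1)
    (u v : V) (p' : List (V × V × ℕ)) (hp' : IsTempPath E u v p') :
    ∃ p : List (V × ℕ), IsTransPath E T (u, firstTime p') (v, lastTime p') p ∧
      project p = p' ∧ transLen α p = costL α p' := by
  obtain ⟨hne, hmem, hch, hhead, hlast⟩ := hp'
  rcases p' with _ | ⟨⟨x, y, s⟩, rest⟩
  · exact absurd rfl hne
  have hux : x = u := by simpa using hhead
  subst hux
  have hsT : s ≤ T := hT (x, y, s) (hmem (x, y, s) (by simp))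
  have hch' : List.Chain' (fun e f : V × V × ℕ => e.2.1 = f.1 ∧ e.2.2 ≤ f.2.2)
      ((x, x, s) :: (x, y, s) :: rest) := by
    rw [List.Chain', List.isChain_cons_cons]
    exact ⟨⟨rfl, le_refl s⟩, hch⟩
  obtain ⟨hL, hC, hP, hW⟩ := key E T α hT x s ((x, y, s) :: rest) hmem hsT hch'
  obtain ⟨z, hz⟩ : ∃ z, ((x, y, s) :: rest).getLast? = some z :=
    ⟨_, List.getLast?_eq_getLast (by simp)⟩
  have hzv : z.2.1 = v := by rw [hz] at hlast; simpa using hlast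
  have hft : firstTime ((x, y, s) :: rest) = s := by simp [firstTime]
  have hlt : lastTime ((x, y, s) :: rest) = z.2.2 := by simp [lastTime, hz]
  obtain ⟨q, hq⟩ := liftP_cons x s ((x, y, s) :: rest)
  refine ⟨liftP x s ((x, y, s) :: rest), ⟨by rw [hq]; simp, hC, by rw [hq, hft]; rfl, ?_⟩, hP, ?_⟩
  · rw [hL, hz]
    simp [hzv, hlt]
  · rw [hW, costL, hft, hlt, hz]
    simp
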